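/- There exists a discrete Bayesian large-sample estimation problem with a consistent posterior on which a distribution-based Bayes estimator is inconsistent: take Θ = ℕ∪{0}, prior P(θ=θ)=2^{-1-θ}, observations x_n ∈ {0,1} deterministic given θ (x = a sequence of θ ones followed by zeros, or all ones if θ=0). Then the estimator θ̂_n(1^n 0^m) = n has posterior expected loss 0 for every distribution-based loss function, yet θ̂_n → ∞ with probability 1 given θ = 0, so it is inconsistent. -/

import Mathlib

open MeasureTheory ProbabilityTheory Filter Set Topology
open scoped ENNReal Classical

/-- The cylinder event determined by the first `n` observations of `ω`. -/
def cylinder {X : ℕ → Type*} (n : ℕ) (ω : ℕ × (∀ i, X i)) :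
    Set (ℕ × (∀ i, X i)) :=
  {ω' | ∀ i < n, ω'.2 i = ω.2 i}

/-- The deterministic observation sequence associated with parameter `θ`:
`θ` ones followed by zeros, or all ones if `θ = 0`. -/
def detSeq (θ : ℕ) : ℕ → Bool := fun n => decide (θ = 0) || decide (n < θ)

noncomputable def w (θ : ℕ) : ℝ≥0∞ := ((2 : ℝ≥0∞) ^ (θ + 1))⁻¹
def p (θ : ℕ) : ℕ × (ℕ → Bool) := (θ, detSeq θ)
noncomputable def myμ : Measure (ℕ × (ℕ → Bool)) := Measure.sum (fun θ => w θ • Measure.dirac (p θ))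
example : MeasurableSingletonClass (ℕ × (ℕ → Bool)) := by infer_instance
example (θ : ℕ) : w θ = (2:ℝ≥0∞)⁻¹ ^ (θ+1) := by rw [w, ENNReal.inv_pow]
lemma w_ne_zero (θ : ℕ) : w θ ≠ 0 := by simp [w]
lemma w_ne_top (θ : ℕ) : w θ ≠ ⊤ := by simp [w]
lemma tsum_w : ∑' θ, w θ = 1 := by
  have : ∀ θ, w θ = (2:ℝ≥0∞)⁻¹ * (2:ℝ≥0∞)⁻¹ ^ θ := by
    intro θ; rw [w, ENNReal.inv_pow, pow_succ, mul_comm]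
  simp_rw [this, ENNReal.tsum_mul_left, ENNReal.tsum_geometric, ENNReal.one_sub_inv_two,
    inv_inv, ENNReal.inv_mul_cancel two_ne_zero ENNReal.ofNat_ne_top]
lemma myμ_apply {s : Set (ℕ × (ℕ → Bool))} (hs : MeasurableSet s) :
    myμ s = ∑' θ, Set.indicator s (fun _ => w θ) (p θ) := by
  rw [myμ, Measure.sum_apply _ hs]
  congr 1; ext θ
  rw [Measure.smul_apply, smul_eq_mul, Measure.dirac_apply' _ hs]
  by_cases h : p θ ∈ s <;> simp [h, Set.indicator]


lemma meas_A (θ : ℕ) : MeasurableSet (Prod.fst ⁻¹' {θ} : Set (ℕ × (ℕ → Bool))) :=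
  measurable_fst (measurableSet_singleton θ)

lemma meas_cylset (n : ℕ) (x : ℕ → Bool) :
    MeasurableSet {ω' : ℕ × (ℕ → Bool) | ∀ i < n, ω'.2 i = x i} := by
  have : {ω' : ℕ × (ℕ → Bool) | ∀ i < n, ω'.2 i = x i}
      = ⋂ i ∈ {i : ℕ | i < n}, ((fun ω' : ℕ × (ℕ → Bool) => ω'.2 i) ⁻¹' {x i}) := by
    ext ω'; simp
  rw [this]
  exact MeasurableSet.biInter (Set.to_countable _) fun i _ =>
    ((measurable_pi_apply i).comp measurable_snd) (measurableSet_singleton (x i))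

lemma myμ_A (θ : ℕ) : myμ (Prod.fst ⁻¹' {θ}) = w θ := by
  rw [myμ_apply (meas_A θ)]
  have h3 : ∀ θ', Set.indicator (Prod.fst ⁻¹' {θ}) (fun _ => w θ') (p θ')
      = if θ' = θ then w θ else 0 := by
    intro θ'; by_cases h : θ' = θ <;> simp [h, p, Set.indicator]
  exact (tsum_congr h3).trans (tsum_ite_eq θ _)

lemma cond_eq_dirac (θ : ℕ) : myμ[|Prod.fst ⁻¹' {θ}] = Measure.dirac (p θ) := by
  ext s hs
  rw [ProbabilityTheory.cond_apply (meas_A θ), myμ_A, Measure.dirac_apply' _ hs]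
  have h2 : myμ (Prod.fst ⁻¹' {θ} ∩ s) = if p θ ∈ s then w θ else 0 := by
    rw [myμ_apply ((meas_A θ).inter hs)]
    have h3 : ∀ θ', Set.indicator (Prod.fst ⁻¹' {θ} ∩ s) (fun _ => w θ') (p θ')
        = if θ' = θ then (if p θ ∈ s then w θ else 0) else 0 := by
      intro θ'
      by_cases h : θ' = θ <;> by_cases h2 : p θ ∈ s <;>
        simp [h, h2, p, Set.indicator, Set.mem_inter_iff] <;> simp_all [p]
    exact (tsum_congr h3).trans (tsum_ite_eq θ _)
  rw [h2]
  by_cases h : p θ ∈ s <;>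
    simp [h, Set.indicator, ENNReal.inv_mul_cancel (w_ne_zero θ) (w_ne_top θ)]

lemma tail_sum (n : ℕ) : (∑' θ', if n ≤ θ' then w θ' else 0) = (2:ℝ≥0∞)⁻¹ ^ n := by
  have h := (Summable.sum_add_tsum_nat_add' (f := fun θ' => if n ≤ θ' then w θ' else 0) (k := n)
    ENNReal.summable)
  rw [← h]
  have h1 : (∑ i ∈ Finset.range n, if n ≤ i then w i else 0) = 0 := by
    apply Finset.sum_eq_zero; intro i hi
    simp [Nat.not_le.mpr (Finset.mem_range.mp hi)]
  have h2 : ∀ i, (if n ≤ i + n then w (i + n) else 0) = w i * (2:ℝ≥0∞)⁻¹ ^ n := by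
    intro i
    rw [if_pos (Nat.le_add_left n i), w, w, ENNReal.inv_pow, ENNReal.inv_pow, ← pow_add]
    ring_nf
  rw [h1, zero_add, tsum_congr h2, ENNReal.tsum_mul_right, tsum_w, one_mul]

lemma mem_allones (θ' n : ℕ) :
    p θ' ∈ {ω' : ℕ × (ℕ → Bool) | ∀ i < n, ω'.2 i = true} ↔ (θ' = 0 ∨ n ≤ θ') := by
  simp only [p, detSeq, Set.mem_setOf_eq, Bool.or_eq_true, decide_eq_true_eq]
  constructor
  · intro h
    by_contra hc
    push_neg at hc
    obtain ⟨h0, hn⟩ := hc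
    have := h (θ' : ℕ) (by omega)
    omega
  · intro h i hi
    omega

lemma myμ_allones {n : ℕ} (hn : 1 ≤ n) :
    myμ {ω' : ℕ × (ℕ → Bool) | ∀ i < n, ω'.2 i = true} = 2⁻¹ + (2:ℝ≥0∞)⁻¹ ^ n := by
  rw [myμ_apply (meas_cylset n (fun _ => true))]
  have h3 : ∀ θ', Set.indicator {ω' : ℕ × (ℕ → Bool) | ∀ i < n, ω'.2 i = true}
      (fun _ => w θ') (p θ')
      = (if θ' = 0 then (2:ℝ≥0∞)⁻¹ else 0) + (if n ≤ θ' then w θ' else 0) := by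
    intro θ'
    by_cases h0 : θ' = 0
    · subst h0
      rw [Set.indicator_of_mem ((mem_allones 0 n).mpr (Or.inl rfl))]
      simp [w, Nat.not_le.mpr hn]
    · by_cases hn' : n ≤ θ'
      · rw [Set.indicator_of_mem ((mem_allones θ' n).mpr (Or.inr hn'))]
        simp [h0, hn']
      · rw [Set.indicator_of_notMem (by rw [mem_allones]; tauto)]
        simp [h0, hn']
  rw [tsum_congr h3, ENNReal.tsum_add, tail_sum, tsum_ite_eq]

lemma myμ_allones_inter (n : ℕ) :
    myμ ({ω' : ℕ × (ℕ → Bool) | ∀ i < n, ω'.2 i = true} ∩ Prod.fst ⁻¹' {0}) = 2⁻¹ := by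
  rw [myμ_apply ((meas_cylset n (fun _ => true)).inter (meas_A 0))]
  have h3 : ∀ θ', Set.indicator ({ω' : ℕ × (ℕ → Bool) | ∀ i < n, ω'.2 i = true}
      ∩ Prod.fst ⁻¹' {0}) (fun _ => w θ') (p θ') = if θ' = 0 then (2:ℝ≥0∞)⁻¹ else 0 := by
    intro θ'
    by_cases h0 : θ' = 0
    · subst h0
      rw [Set.indicator_of_mem (Set.mem_inter ((mem_allones 0 n).mpr (Or.inl rfl)) (show p 0 ∈ Prod.fst ⁻¹' {0} from rfl))]
      simp [w]
    · rw [Set.indicator_of_notMem (by simp [p, h0])]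
      simp [h0]
  exact (tsum_congr h3).trans (tsum_ite_eq 0 _)

lemma detSeq_eq_iff {θ θ' n : ℕ} (h0 : θ ≠ 0) (hn : θ < n) :
    (∀ i < n, detSeq θ' i = detSeq θ i) ↔ θ' = θ := by
  constructor
  · intro h
    have hθ := h θ hn
    by_contra hne
    have h1 : (decide (θ' = 0) || decide (θ < θ')) = (decide (θ = 0) || decide (θ < θ)) := hθ
    simp only [decide_eq_false h0, lt_self_iff_false, decide_false, Bool.or_false,
      Bool.or_eq_false_iff, decide_eq_false_iff_not] at h1
    have hlt : θ' < θ := by omega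
    have h2 := h θ' (by omega)
    simp only [detSeq] at h2
    have : (decide (θ' = 0) || decide (θ' < θ')) = (decide (θ = 0) || decide (θ' < θ)) := h2
    simp [h1.1, h0, hlt] at this
  · rintro rfl; intro i _; rfl

lemma myμ_cyl_pos {θ n : ℕ} (h0 : θ ≠ 0) (hn : θ < n) :
    myμ {ω' : ℕ × (ℕ → Bool) | ∀ i < n, ω'.2 i = detSeq θ i} = w θ := by
  rw [myμ_apply (meas_cylset n (detSeq θ))]
  have h3 : ∀ θ', Set.indicator {ω' : ℕ × (ℕ → Bool) | ∀ i < n, ω'.2 i = detSeq θ i}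
      (fun _ => w θ') (p θ') = if θ' = θ then w θ else 0 := by
    intro θ'
    by_cases h : θ' = θ
    · subst h
      rw [Set.indicator_of_mem (show p θ' ∈ {ω' : ℕ × (ℕ → Bool) | ∀ i < n, ω'.2 i = detSeq θ' i} from fun i _ => rfl)]
      simp
    · rw [Set.indicator_of_notMem]
      · simp [h]
      · intro hm
        exact h ((detSeq_eq_iff h0 hn).mp hm)
  exact (tsum_congr h3).trans (tsum_ite_eq θ _)

lemma myμ_cyl_pos_inter {θ n : ℕ} (h0 : θ ≠ 0) (hn : θ < n) :
    myμ ({ω' : ℕ × (ℕ → Bool) | ∀ i < n, ω'.2 i = detSeq θ i} ∩ Prod.fst ⁻¹' {θ}) = w θ := by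
  rw [myμ_apply ((meas_cylset n (detSeq θ)).inter (meas_A θ))]
  have h3 : ∀ θ', Set.indicator ({ω' : ℕ × (ℕ → Bool) | ∀ i < n, ω'.2 i = detSeq θ i}
      ∩ Prod.fst ⁻¹' {θ}) (fun _ => w θ') (p θ') = if θ' = θ then w θ else 0 := by
    intro θ'
    by_cases h : θ' = θ
    · subst h
      rw [Set.indicator_of_mem (Set.mem_inter
        (show p θ' ∈ {ω' : ℕ × (ℕ → Bool) | ∀ i < n, ω'.2 i = detSeq θ' i} from fun i _ => rfl)
        (show p θ' ∈ Prod.fst ⁻¹' {θ'} from rfl))]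
      simp
    · rw [Set.indicator_of_notMem (by simp [p, h])]
      simp [h]
  exact (tsum_congr h3).trans (tsum_ite_eq θ _)

lemma myμ_allones_inter_mid {θ' n : ℕ} (h : ¬(θ' = 0 ∨ n ≤ θ')) :
    myμ ({ω' : ℕ × (ℕ → Bool) | ∀ i < n, ω'.2 i = true} ∩ Prod.fst ⁻¹' {θ'}) = 0 := by
  rw [myμ_apply ((meas_cylset n (fun _ => true)).inter (meas_A θ'))]
  rw [ENNReal.tsum_eq_zero]
  intro θ''
  by_cases he : θ'' = θ'
  · subst he
    rw [Set.indicator_of_notMem]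
    intro hm
    exact h ((mem_allones θ'' n).mp hm.1)
  · rw [Set.indicator_of_notMem]
    simp [p, he]

lemma tendsto_post0 :
    Tendsto (fun n : ℕ => ((2:ℝ≥0∞)⁻¹ + (2:ℝ≥0∞)⁻¹ ^ n)⁻¹ * 2⁻¹) atTop (𝓝 1) := by
  have h1 : Tendsto (fun n : ℕ => (2:ℝ≥0∞)⁻¹ ^ n) atTop (𝓝 0) :=
    ENNReal.tendsto_pow_atTop_nhds_zero_of_lt_one (by norm_num : (2:ℝ≥0∞)⁻¹ < 1)
  have h2 : Tendsto (fun n : ℕ => (2:ℝ≥0∞)⁻¹ + (2:ℝ≥0∞)⁻¹ ^ n) atTop (𝓝 ((2:ℝ≥0∞)⁻¹ + 0)) :=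
    h1.const_add _
  have h3 : Tendsto (fun n : ℕ => ((2:ℝ≥0∞)⁻¹ + (2:ℝ≥0∞)⁻¹ ^ n)⁻¹) atTop (𝓝 ((2:ℝ≥0∞)⁻¹ + 0)⁻¹) := h2.inv
  have h4 := ENNReal.Tendsto.mul_const h3 (Or.inr (by simp : (2:ℝ≥0∞)⁻¹ ≠ ⊤))
  have he : (((2:ℝ≥0∞)⁻¹ + 0)⁻¹) * 2⁻¹ = 1 := by
    rw [add_zero, inv_inv, ENNReal.mul_inv_cancel two_ne_zero ENNReal.ofNat_ne_top]
  rwa [he] at h4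

/-- There is a discrete Bayesian large-sample estimation problem with a consistent posterior
(`Θ = ℕ`, prior `2^{-1-θ}`, observations deterministic given `θ`: `θ` ones then zeros, all ones
for `θ = 0`) on which the estimator `θ̂ₙ = n` has posterior expected loss `0` for every
distribution-based loss function, yet `θ̂ₙ → ∞`, so it is inconsistent. -/
theorem distribution_based_bayes_estimator_inconsistent :
    ∃ μ : Measure (ℕ × (ℕ → Bool)), IsProbabilityMeasure μ ∧
      -- the prior is P(θ) = 2^{-1-θ}
      (∀ θ : ℕ, μ (Prod.fst ⁻¹' {θ}) = ((2 : ℝ≥0∞) ^ (θ + 1))⁻¹) ∧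
      -- given θ, the observations are deterministic
      (∀ θ : ℕ, (μ[|Prod.fst ⁻¹' {θ}]) {ω | ω.2 = detSeq θ} = 1) ∧
      -- the problem has a consistent posterior
      (∀ θ : ℕ,
        ∀ᵐ ω ∂(μ[|Prod.fst ⁻¹' {θ}]),
          Tendsto (fun n : ℕ => (μ[|cylinder n ω]) (Prod.fst ⁻¹' {θ})) atTop (𝓝 1)) ∧
      -- for every distribution-based loss function (zero whenever the two parameters induce
      -- identical distributions over the first n observations), the estimator θ̂ₙ = n has
      -- posterior expected loss 0 on all-ones data
      (∀ L : ℕ → ℕ → ℕ → ℝ≥0∞,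
        (∀ (n : ℕ) (θ θ' : ℕ),
          (∀ x : ℕ → Bool,
            (μ[|Prod.fst ⁻¹' {θ}]) {ω | ∀ i < n, ω.2 i = x i} =
              (μ[|Prod.fst ⁻¹' {θ'}]) {ω | ∀ i < n, ω.2 i = x i}) → L n θ θ' = 0) →
        ∀ (n : ℕ) (ω : ℕ × (ℕ → Bool)), (∀ i < n, ω.2 i = true) →
          (∑' θ' : ℕ, (μ[|cylinder n ω]) (Prod.fst ⁻¹' {θ'}) * L n θ' n) = 0) ∧
      -- the estimator θ̂ₙ = n diverges to infinity ...
      (Tendsto (fun n : ℕ => n) atTop atTop ∧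
      -- ... and is inconsistent
      ¬ (∀ θ : ℕ, ∀ U ∈ 𝓝 θ,
          Tendsto (fun n : ℕ => (μ[|Prod.fst ⁻¹' {θ}]) {ω | n ∈ U}) atTop (𝓝 1))) := by
  refine ⟨myμ, ?_, ?_, ?_, ?_, ?_, tendsto_id, ?_⟩
  · -- probability measure
    constructor
    rw [myμ_apply MeasurableSet.univ]
    simp only [Set.indicator_univ]
    exact tsum_w
  · -- prior
    intro θ
    exact myμ_A θ
  · -- deterministic observations
    intro θ
    rw [cond_eq_dirac, Measure.dirac_apply,
      Set.indicator_of_mem (show p θ ∈ {ω : ℕ × (ℕ → Bool) | ω.2 = detSeq θ} from rfl)]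
    rfl
  · -- consistent posterior
    intro θ
    rw [cond_eq_dirac, MeasureTheory.ae_dirac_eq, Filter.eventually_pure]
    by_cases h0 : θ = 0
    · subst h0
      have key : ∀ n, 1 ≤ n → (myμ[|_root_.cylinder n (p 0)]) (Prod.fst ⁻¹' {0})
          = ((2:ℝ≥0∞)⁻¹ + (2:ℝ≥0∞)⁻¹ ^ n)⁻¹ * 2⁻¹ := by
        intro n hn
        have hset : _root_.cylinder n (p 0) = {ω' : ℕ × (ℕ → Bool) | ∀ i < n, ω'.2 i = true} := by
          ext ω'
          simp only [_root_.cylinder, Set.mem_setOf_eq]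
          constructor <;> intro h i hi <;> have hh := h i hi
          · rw [hh]; rfl
          · rw [hh]; rfl
        rw [hset, ProbabilityTheory.cond_apply (meas_cylset n (fun _ => true)),
          myμ_allones hn, myμ_allones_inter]
      refine Tendsto.congr' ?_ tendsto_post0
      filter_upwards [eventually_ge_atTop 1] with n hn
      exact (key n hn).symm
    · have key : ∀ n, θ + 1 ≤ n → (myμ[|_root_.cylinder n (p θ)]) (Prod.fst ⁻¹' {θ}) = 1 := by
        intro n hn
        have hset : _root_.cylinder n (p θ)
            = {ω' : ℕ × (ℕ → Bool) | ∀ i < n, ω'.2 i = detSeq θ i} := rfl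
        rw [hset, ProbabilityTheory.cond_apply (meas_cylset n (detSeq θ)),
          myμ_cyl_pos h0 (by omega), myμ_cyl_pos_inter h0 (by omega),
          ENNReal.inv_mul_cancel (w_ne_zero θ) (w_ne_top θ)]
      refine Tendsto.congr' ?_ tendsto_const_nhds
      filter_upwards [eventually_ge_atTop (θ+1)] with n hn
      exact (key n hn).symm
  · -- distribution-based loss has zero posterior risk
    intro L hL n ω hω
    rw [ENNReal.tsum_eq_zero]
    intro θ'
    by_cases hc : θ' = 0 ∨ n ≤ θ'
    · have hLz : L n θ' n = 0 := by
        apply hL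
        intro x
        rw [cond_eq_dirac, cond_eq_dirac]
        have hd : ∀ i < n, detSeq θ' i = detSeq n i := by
          intro i hi
          rcases hc with h | h
          · subst h; simp [detSeq, hi]
          · simp [detSeq, hi, Nat.lt_of_lt_of_le hi h]
        have hmem : (p θ' ∈ {ω : ℕ × (ℕ → Bool) | ∀ i < n, ω.2 i = x i}) ↔
            (p n ∈ {ω : ℕ × (ℕ → Bool) | ∀ i < n, ω.2 i = x i}) := by
          constructor <;> intro hm i hi
          · show detSeq n i = x i
            rw [← hd i hi]
            exact hm i hi
          · show detSeq θ' i = x i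
            rw [hd i hi]
            exact hm i hi
        by_cases hm : p n ∈ {ω : ℕ × (ℕ → Bool) | ∀ i < n, ω.2 i = x i}
        · rw [Measure.dirac_apply' _ (meas_cylset n x), Measure.dirac_apply' _ (meas_cylset n x),
            Set.indicator_of_mem (hmem.mpr hm), Set.indicator_of_mem hm]
          rfl
        · rw [Measure.dirac_apply' _ (meas_cylset n x), Measure.dirac_apply' _ (meas_cylset n x),
            Set.indicator_of_notMem (fun h => hm (hmem.mp h)), Set.indicator_of_notMem hm]
      rw [hLz, mul_zero]
    · have hset : _root_.cylinder n ω = {ω' : ℕ × (ℕ → Bool) | ∀ i < n, ω'.2 i = true} := by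
        ext ω'
        simp only [_root_.cylinder, Set.mem_setOf_eq]
        constructor <;> intro h i hi
        · rw [h i hi]; exact hω i hi
        · rw [h i hi]; exact (hω i hi).symm
      have hz : (myμ[|_root_.cylinder n ω]) (Prod.fst ⁻¹' {θ'}) = 0 := by
        rw [hset, ProbabilityTheory.cond_apply (meas_cylset n (fun _ => true)),
          myμ_allones_inter_mid hc, mul_zero]
      rw [hz, zero_mul]
  · -- inconsistency
    intro hcon
    have h1 := hcon 0 {0} (IsOpen.mem_nhds (isOpen_discrete _) rfl)
    have h3 : (fun n : ℕ => (myμ[|Prod.fst ⁻¹' {0}]) {ω : ℕ × (ℕ → Bool) | n ∈ ({0}:Set ℕ)})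
        =ᶠ[atTop] (fun _ => (0:ℝ≥0∞)) := by
      filter_upwards [eventually_ge_atTop 1] with n hn
      have he : {ω : ℕ × (ℕ → Bool) | n ∈ ({0}:Set ℕ)} = ∅ := by
        ext ωx
        simp only [Set.mem_setOf_eq, Set.mem_singleton_iff, Set.mem_empty_iff_false, iff_false]
        omega
      rw [he, measure_empty]
    have h4 := h1.congr' h3
    exact one_ne_zero (tendsto_nhds_unique h4 tendsto_const_nhds)
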